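/- (Explicit solution of the shifted wave equation on a homogeneous tree.) Let u solve the Cauchy problem for the shifted wave equation on T_q with data f, g : T_q → ℂ. Then u(x,n) = (C_n f)(x) + (S_n g)(x) for all x ∈ T_q and n ∈ ℤ; explicitly, for n ≠ 0, u(x,n) = (1/2)·q^(−|n|/2)·Σ_{y : d(y,x) = |n|} f(y) − ((q−1)/2)·q^(−|n|/2)·Σ_{y : d(y,x) < |n|, |n|−d(y,x) even} f(y) + sign(n)·q^(−(|n|−1)/2)·Σ_{y : d(y,x) < |n|, |n|−d(y,x) odd} g(y). -/

import Mathlib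

open scoped BigOperators

/-- A homogeneous tree of degree `q + 1`: a connected acyclic simple graph in which
every vertex has exactly `q + 1` neighbours. Spheres for the graph distance are finite. -/
structure HomTree (q : ℕ) where
  V : Type
  G : SimpleGraph V
  conn : G.Connected
  acyclic : G.IsAcyclic
  sphereFin : ∀ (x : V) (n : ℕ), {y : V | G.dist x y = n}.Finite
  nbrFin : ∀ x : V, {y : V | G.Adj x y}.Finite
  degree : ∀ x : V, (nbrFin x).toFinset.card = q + 1

namespace HomTree

variable {q : ℕ}

/-- The sphere `S(x,n)` as a finite set. -/
noncomputable def sphere (T : HomTree q) (x : T.V) (n : ℕ) : Finset T.V :=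
  (T.sphereFin x n).toFinset

/-- The volume `δ(n)` of spheres. -/
def delta (q n : ℕ) : ℕ := if n = 0 then 1 else (q + 1) * q ^ (n - 1)

/-- The combinatorial Laplacian on the tree. -/
noncomputable def lap (T : HomTree q) (f : T.V → ℂ) (x : T.V) : ℂ :=
  f x - (1 / ((q : ℂ) + 1)) * ∑ y ∈ T.sphere x 1, f y

/-- Spherical means. -/
noncomputable def sphMean (T : HomTree q) (f : T.V → ℂ) (x : T.V) (n : ℕ) : ℂ :=
  (1 / (delta q n : ℂ)) * ∑ y ∈ T.sphere x n, f y

/-- Real powers of `q`, as a complex number. -/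
noncomputable def qpow (q : ℕ) (x : ℝ) : ℂ := (((q : ℝ) ^ x : ℝ) : ℂ)

/-- `γ = 2 / (q^{1/2} + q^{-1/2})`. -/
noncomputable def gam (q : ℕ) : ℝ := 2 / ((q : ℝ) ^ ((1 : ℝ)/2) + (q : ℝ) ^ (-(1 : ℝ)/2))

/-- The combinatorial Laplacian on `ℤ`. -/
noncomputable def lapZ (φ : ℤ → ℂ) (m : ℤ) : ℂ := φ m - (φ (m + 1) + φ (m - 1)) / 2

lemma ball_finite (T : HomTree q) (x : T.V) (n : ℕ) :
    {y : T.V | T.G.dist x y ≤ n}.Finite := by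
  have h : {y : T.V | T.G.dist x y ≤ n} ⊆ ⋃ m ∈ Set.Iic n, {y : T.V | T.G.dist x y = m} := by
    intro y hy
    exact Set.mem_biUnion hy rfl
  exact (((Set.finite_Iic n)).biUnion fun m _ => T.sphereFin x m).subset h

/-- The ball `B(x,n)` as a finite set. -/
noncomputable def ball (T : HomTree q) (x : T.V) (n : ℕ) : Finset T.V :=
  (T.ball_finite x n).toFinset

/-- The operator `M_n` (with `M_n = 0` for `n < 0`). -/
noncomputable def Mop (T : HomTree q) (n : ℤ) (f : T.V → ℂ) (x : T.V) : ℂ :=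
  if 0 ≤ n then
    qpow q (-(n : ℝ) / 2) *
      ∑ y ∈ (T.ball x n.toNat).filter (fun y => (n.toNat - T.G.dist x y) % 2 = 0), f y
  else 0

/-- The operator `C_n = (M_{|n|} - M_{|n|-2})/2`, `C_0 = Id`. -/
noncomputable def Cop (T : HomTree q) (n : ℤ) (f : T.V → ℂ) (x : T.V) : ℂ :=
  if n = 0 then f x else (Mop T |n| f x - Mop T (|n| - 2) f x) / 2

/-- The operator `S_n = sign(n) · M_{|n|-1}`. -/
noncomputable def Sop (T : HomTree q) (n : ℤ) (g : T.V → ℂ) (x : T.V) : ℂ :=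
  (n.sign : ℂ) * Mop T (|n| - 1) g x

/-- `u` solves the shifted wave equation on the tree. -/
def IsWaveSol (T : HomTree q) (u : T.V → ℤ → ℂ) : Prop :=
  ∀ (x : T.V) (n : ℤ),
    u x (n + 1) + u x (n - 1) = qpow q (-(1 : ℝ)/2) * ∑ y ∈ T.sphere x 1, u y n

/-- `u` solves the Cauchy problem for the shifted wave equation with data `f`, `g`. -/
def IsCauchy (T : HomTree q) (f g : T.V → ℂ) (u : T.V → ℤ → ℂ) : Prop :=
  IsWaveSol T u ∧ (∀ x, u x 0 = f x) ∧ ∀ x, (u x 1 - u x (-1)) / 2 = g x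

/-- Kinetic energy. -/
noncomputable def kinetic (T : HomTree q) (u : T.V → ℤ → ℂ) (n : ℤ) : ℝ :=
  (1/2) * ∑' x : T.V, ‖(u x (n + 1) - u x (n - 1)) / 2‖ ^ 2

/-- Potential energy. -/
noncomputable def potential (T : HomTree q) (u : T.V → ℤ → ℂ) (n : ℤ) : ℝ :=
  (1 / (4 * (q : ℝ))) * ∑' p : T.V × T.V,
      (if T.G.dist p.1 p.2 = 2 then ‖(u p.1 n - u p.2 n) / 2‖ ^ 2 else 0)
    - (((q : ℝ) - 1) ^ 2 / (8 * (q : ℝ))) * ∑' x : T.V, ‖u x n‖ ^ 2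

/-- The two-step Laplacian. -/
noncomputable def lap2 (T : HomTree q) (f : T.V → ℂ) (x : T.V) : ℂ :=
  f x - (1 / ((q : ℂ) * ((q : ℂ) + 1))) * ∑ y ∈ T.sphere x 2, f y

end HomTree

namespace HomTreeAux

variable {V : Type} [DecidableEq V] {G : SimpleGraph V}

lemma dist_le_of_mem_support (hc : G.Connected) {z y x : V} (p : G.Walk z y)
    (hx : x ∈ p.support) : G.dist x y + (p.takeUntil x hx).length ≤ p.length := by
  have hspec := p.take_spec hx
  have hlen : (p.takeUntil x hx).length + (p.dropUntil x hx).length = p.length := by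
    conv_rhs => rw [← hspec]
    rw [SimpleGraph.Walk.length_append]
  have hd : G.dist x y ≤ (p.dropUntil x hx).length := SimpleGraph.dist_le _
  omega

lemma dist_adj (hc : G.Connected) (ha : G.IsAcyclic) {x z : V} (y : V) (hadj : G.Adj x z) :
    G.dist z y + 1 = G.dist x y ∨ G.dist z y = G.dist x y + 1 := by
  have hxz : G.dist x z = 1 := SimpleGraph.dist_eq_one_iff_adj.mpr hadj
  have h1 : G.dist x y ≤ 1 + G.dist z y := by
    have := hc.dist_triangle (u := x) (v := z) (w := y); omega
  have h2 : G.dist z y ≤ 1 + G.dist x y := by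
    have h3 := hc.dist_triangle (u := z) (v := x) (w := y)
    have h4 : G.dist z x = 1 := by rwa [SimpleGraph.dist_comm] at hxz
    omega
  rcases eq_or_ne (G.dist x y) 0 with h0 | h0
  · right
    have hxy : x = y := (hc.dist_eq_zero_iff).mp h0
    rw [h0, ← hxy, SimpleGraph.dist_comm, hxz]
  have hne : G.dist z y ≠ G.dist x y := by
    intro heq
    obtain ⟨P, hP, hPl⟩ := hc.exists_path_of_dist z y
    obtain ⟨Q, hQ, hQl⟩ := hc.exists_path_of_dist x y
    have hxP : x ∉ P.support := by
      intro hx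
      have hle := dist_le_of_mem_support hc P hx
      have htne : (P.takeUntil x hx).length ≠ 0 := by
        intro h
        exact hadj.ne (SimpleGraph.Walk.eq_of_length_eq_zero h).symm
      omega
    have hpath : (SimpleGraph.Walk.cons hadj P).IsPath := hP.cons hxP
    have huniq := ha.path_unique ⟨SimpleGraph.Walk.cons hadj P, hpath⟩ ⟨Q, hQ⟩
    have hl := congrArg (fun p : G.Path x y => p.1.length) huniq
    simp only [SimpleGraph.Walk.length_cons] at hl
    omega
  omega

lemma exists_unique_toward (hc : G.Connected) (ha : G.IsAcyclic) {x y : V}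
    (h0 : G.dist x y ≠ 0) :
    ∃! z : V, G.Adj x z ∧ G.dist z y + 1 = G.dist x y := by
  obtain ⟨P, hP, hPl⟩ := hc.exists_path_of_dist x y
  have hx : ∀ {z : V}, G.Adj x z → ∀ (Q : G.Walk z y), Q.IsPath →
      Q.length + 1 = G.dist x y → x ∉ Q.support := by
    intro z hadj Q hQ hQl hxQ
    have hle := dist_le_of_mem_support hc Q hxQ
    omega
  cases P with
  | nil => rw [← hPl] at h0; simp at h0
  | @cons _ z _ hadj P' =>
    rw [SimpleGraph.Walk.cons_isPath_iff] at hP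
    have hPl' : P'.length + 1 = G.dist x y := by
      rw [← hPl, SimpleGraph.Walk.length_cons]
    have hdz : G.dist z y + 1 = G.dist x y := by
      have h1 : G.dist z y ≤ P'.length := SimpleGraph.dist_le _
      have h2 : G.dist x y ≤ 1 + G.dist z y := by
        have h3 := hc.dist_triangle (u := x) (v := z) (w := y)
        have hxz : G.dist x z = 1 := SimpleGraph.dist_eq_one_iff_adj.mpr hadj
        omega
      omega
    refine ⟨z, ⟨hadj, hdz⟩, ?_⟩
    rintro w ⟨hadjw, hdw⟩
    obtain ⟨Qw, hQw, hQwl⟩ := hc.exists_path_of_dist w y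
    obtain ⟨Qz, hQz, hQzl⟩ := hc.exists_path_of_dist z y
    have hw : x ∉ Qw.support := hx hadjw Qw hQw (by omega)
    have hz : x ∉ Qz.support := hx hadj Qz hQz (by omega)
    have huniq := ha.path_unique ⟨SimpleGraph.Walk.cons hadjw Qw, hQw.cons hw⟩
      ⟨SimpleGraph.Walk.cons hadj Qz, hQz.cons hz⟩
    have := congrArg (fun p : G.Path x y => p.1.getVert 1) huniq
    simpa [SimpleGraph.Walk.getVert_cons_succ, SimpleGraph.Walk.getVert_zero] using this

/-- The neighbour counting lemma. -/
lemma card_filter_nbr (hc : G.Connected) (ha : G.IsAcyclic) {x : V}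
    (hfin : {z : V | G.Adj x z}.Finite) {qq : ℕ} (hdeg : hfin.toFinset.card = qq + 1)
    (y : V) (n : ℕ) :
    (hfin.toFinset.filter (fun z => G.dist z y ≤ n ∧ (n - G.dist z y) % 2 = 0)).card
      = (if G.dist x y ≤ n + 1 ∧ (n + 1 - G.dist x y) % 2 = 0 then 1 else 0)
        + qq * (if G.dist x y + 1 ≤ n ∧ (n - 1 - G.dist x y) % 2 = 0 then 1 else 0) := by
  set d := G.dist x y with hd
  have hmem : ∀ z, z ∈ hfin.toFinset ↔ G.Adj x z := fun z => hfin.mem_toFinset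
  rcases eq_or_ne d 0 with h0 | h0
  · -- y = x ; every neighbour is at distance 1
    have hxy : x = y := hc.dist_eq_zero_iff.mp (by omega)
    have hone : ∀ z ∈ hfin.toFinset, G.dist z y = 1 := by
      intro z hz
      rw [← hxy, SimpleGraph.dist_comm]
      exact SimpleGraph.dist_eq_one_iff_adj.mpr ((hmem z).mp hz)
    by_cases hcond : 1 ≤ n ∧ (n - 1) % 2 = 0
    · rw [Finset.filter_true_of_mem (fun z hz => by rw [hone z hz]; omega), hdeg]
      rw [if_pos (by omega), if_pos (by omega)]
      omega
    · rw [Finset.filter_false_of_mem (fun z hz => by rw [hone z hz]; omega)]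
      rw [if_neg (by omega), if_neg (by omega)]
      simp
  · -- d ≥ 1 : split neighbours into the one toward y and the q away from y
    set A := hfin.toFinset.filter (fun z => G.dist z y + 1 = d) with hA
    set B := hfin.toFinset.filter (fun z => G.dist z y = d + 1) with hB
    have hcardA : A.card = 1 := by
      obtain ⟨z₀, hz₀, huniq⟩ := exists_unique_toward hc ha (x := x) (y := y) h0
      rw [Finset.card_eq_one]
      refine ⟨z₀, ?_⟩
      ext z
      simp only [hA, Finset.mem_filter, hmem, Finset.mem_singleton]
      constructor
      · rintro ⟨h1, h2⟩; exact huniq z ⟨h1, h2⟩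
      · rintro rfl; exact hz₀
    have hdich : ∀ z ∈ hfin.toFinset, G.dist z y + 1 = d ∨ G.dist z y = d + 1 :=
      fun z hz => dist_adj hc ha y ((hmem z).mp hz)
    have hcardB : B.card = qq := by
      have hsum := Finset.card_filter_add_card_filter_not
        (s := hfin.toFinset) (p := fun z => G.dist z y + 1 = d)
      have hBeq : hfin.toFinset.filter (fun z => ¬ (G.dist z y + 1 = d)) = B := by
        ext z
        simp only [Finset.mem_filter, hB]
        constructor
        · rintro ⟨h1, h2⟩
          exact ⟨h1, by rcases hdich z h1 with h | h; exact absurd h h2; exact h⟩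
        · rintro ⟨h1, h2⟩; exact ⟨h1, by omega⟩
      rw [hBeq] at hsum
      rw [← hA] at hsum
      omega
    have hunion : hfin.toFinset = A ∪ B := by
      ext z
      simp only [hA, hB, Finset.mem_union, Finset.mem_filter]
      constructor
      · intro hz; rcases hdich z hz with h | h
        · exact Or.inl ⟨hz, h⟩
        · exact Or.inr ⟨hz, h⟩
      · rintro (⟨hz, _⟩ | ⟨hz, _⟩) <;> exact hz
    have hdisj : Disjoint A B := by
      rw [Finset.disjoint_left]
      intro z hzA hzB
      simp only [hA, hB, Finset.mem_filter] at hzA hzB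
      omega
    rw [hunion, Finset.filter_union,
      Finset.card_union_of_disjoint (Finset.disjoint_filter_filter hdisj)]
    have hAval : (A.filter (fun z => G.dist z y ≤ n ∧ (n - G.dist z y) % 2 = 0)).card
        = if d - 1 ≤ n ∧ (n - (d - 1)) % 2 = 0 then 1 else 0 := by
      by_cases hc1 : d - 1 ≤ n ∧ (n - (d - 1)) % 2 = 0
      · rw [Finset.filter_true_of_mem, hcardA, if_pos hc1]
        intro z hz
        simp only [hA, Finset.mem_filter] at hz
        omega
      · rw [Finset.filter_false_of_mem, if_neg hc1]
        · simp
        · intro z hz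
          simp only [hA, Finset.mem_filter] at hz
          omega
    have hBval : (B.filter (fun z => G.dist z y ≤ n ∧ (n - G.dist z y) % 2 = 0)).card
        = if d + 1 ≤ n ∧ (n - (d + 1)) % 2 = 0 then qq else 0 := by
      by_cases hc2 : d + 1 ≤ n ∧ (n - (d + 1)) % 2 = 0
      · rw [Finset.filter_true_of_mem, hcardB, if_pos hc2]
        intro z hz
        simp only [hB, Finset.mem_filter] at hz
        omega
      · rw [Finset.filter_false_of_mem, if_neg hc2]
        · simp
        · intro z hz
          simp only [hB, Finset.mem_filter] at hz
          omega
    rw [hAval, hBval]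
    split_ifs <;> omega

end HomTreeAux

section TreeSums

open HomTree

variable {q : ℕ}

/-- Unnormalised parity-ball sums. -/
noncomputable def Nn (T : HomTree q) (n : ℕ) (h : T.V → ℂ) (x : T.V) : ℂ :=
  ∑ y ∈ (T.ball x n).filter (fun y => (n - T.G.dist x y) % 2 = 0), h y

lemma mem_ball {T : HomTree q} {x y : T.V} {n : ℕ} :
    y ∈ T.ball x n ↔ T.G.dist x y ≤ n := by
  simp [HomTree.ball, Set.Finite.mem_toFinset]

lemma mem_sphere {T : HomTree q} {x y : T.V} {n : ℕ} :
    y ∈ T.sphere x n ↔ T.G.dist x y = n := by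
  simp [HomTree.sphere, Set.Finite.mem_toFinset]

lemma sphere_one (T : HomTree q) (x : T.V) : T.sphere x 1 = (T.nbrFin x).toFinset := by
  ext z
  simp [HomTree.sphere, Set.Finite.mem_toFinset, SimpleGraph.dist_eq_one_iff_adj]

lemma sum_sphere_Nn (T : HomTree q) (h : T.V → ℂ) (x : T.V) (n : ℕ) :
    ∑ z ∈ T.sphere x 1, Nn T n h z
      = Nn T (n+1) h x + (q : ℂ) * (if n = 0 then 0 else Nn T (n-1) h x) := by
  classical
  set B := T.ball x (n+1) with hB
  have hstep : ∀ z ∈ T.sphere x 1, Nn T n h z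
      = ∑ y ∈ B, if T.G.dist z y ≤ n ∧ (n - T.G.dist z y) % 2 = 0 then h y else 0 := by
    intro z hz
    have hxz : T.G.dist x z = 1 := mem_sphere.mp hz
    have hset : (T.ball z n).filter (fun y => (n - T.G.dist z y) % 2 = 0)
        = B.filter (fun y => T.G.dist z y ≤ n ∧ (n - T.G.dist z y) % 2 = 0) := by
      ext y
      simp only [Finset.mem_filter, mem_ball, hB]
      constructor
      · rintro ⟨h1, h2⟩
        refine ⟨?_, h1, h2⟩
        have ht := T.conn.dist_triangle (u := x) (v := z) (w := y)
        omega
      · rintro ⟨_, h1, h2⟩; exact ⟨h1, h2⟩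
    rw [Nn, hset, Finset.sum_filter]
  rw [Finset.sum_congr rfl hstep, Finset.sum_comm]
  have hinner : ∀ y ∈ B,
      (∑ z ∈ T.sphere x 1,
        if T.G.dist z y ≤ n ∧ (n - T.G.dist z y) % 2 = 0 then h y else 0)
      = (((if T.G.dist x y ≤ n + 1 ∧ (n + 1 - T.G.dist x y) % 2 = 0 then 1 else 0)
          + q * (if T.G.dist x y + 1 ≤ n ∧ (n - 1 - T.G.dist x y) % 2 = 0 then 1 else 0) : ℕ)
          : ℂ) * h y := by
    intro y _
    rw [sphere_one, ← Finset.sum_filter, Finset.sum_const,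
      HomTreeAux.card_filter_nbr T.conn T.acyclic (T.nbrFin x) (T.degree x) y n]
    simp [nsmul_eq_mul]
  rw [Finset.sum_congr rfl hinner]
  have hsplit : ∀ y ∈ B,
      ((((if T.G.dist x y ≤ n + 1 ∧ (n + 1 - T.G.dist x y) % 2 = 0 then 1 else 0)
          + q * (if T.G.dist x y + 1 ≤ n ∧ (n - 1 - T.G.dist x y) % 2 = 0 then 1 else 0) : ℕ))
          : ℂ) * h y
      = (if ((n + 1) - T.G.dist x y) % 2 = 0 then h y else 0)
        + (q : ℂ) * (if T.G.dist x y + 1 ≤ n ∧ (n - 1 - T.G.dist x y) % 2 = 0 then h y else 0) := by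
    intro y hy
    have hd : T.G.dist x y ≤ n + 1 := mem_ball.mp hy
    push_cast [apply_ite]
    split_ifs <;> (try (exfalso; omega)) <;> ring
  rw [Finset.sum_congr rfl hsplit, Finset.sum_add_distrib]
  congr 1
  · rw [Nn, Finset.sum_filter]
  · rw [← Finset.mul_sum]
    congr 1
    rcases eq_or_ne n 0 with rfl | hn
    · rw [if_pos rfl]
      refine Finset.sum_eq_zero fun y hy => ?_
      rw [if_neg (by omega)]
    · have hset : (T.ball x (n-1)).filter (fun y => (n - 1 - T.G.dist x y) % 2 = 0)
          = B.filter (fun y => T.G.dist x y + 1 ≤ n ∧ (n - 1 - T.G.dist x y) % 2 = 0) := by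
        ext y
        simp only [Finset.mem_filter, mem_ball, hB]
        omega
      rw [if_neg hn, Nn, hset, Finset.sum_filter]

end TreeSums

section OpAlgebra

open HomTree

variable {q : ℕ}

lemma qpow_add (hq : 0 < q) (a b : ℝ) :
    HomTree.qpow q (a + b) = HomTree.qpow q a * HomTree.qpow q b := by
  unfold HomTree.qpow
  rw [Real.rpow_add (by exact_mod_cast hq), Complex.ofReal_mul]

lemma qpow_zero : HomTree.qpow q 0 = 1 := by
  unfold HomTree.qpow
  rw [Real.rpow_zero, Complex.ofReal_one]

lemma qpow_one (hq : 0 < q) : HomTree.qpow q 1 = (q : ℂ) := by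
  unfold HomTree.qpow
  rw [Real.rpow_one]
  norm_num

lemma Mop_natCast (T : HomTree q) (n : ℕ) (h : T.V → ℂ) (x : T.V) :
    HomTree.Mop T (n : ℤ) h x = HomTree.qpow q (-(n : ℝ) / 2) * Nn T n h x := by
  rw [HomTree.Mop, if_pos (Int.natCast_nonneg n)]
  rw [Nn]
  norm_num

lemma Mop_neg' (T : HomTree q) {n : ℤ} (hn : n < 0) (h : T.V → ℂ) (x : T.V) :
    HomTree.Mop T n h x = 0 := by
  rw [HomTree.Mop, if_neg (by omega)]

lemma Nn_zero (T : HomTree q) (h : T.V → ℂ) (x : T.V) : Nn T 0 h x = h x := by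
  rw [Nn]
  have : (T.ball x 0).filter (fun y => (0 - T.G.dist x y) % 2 = 0) = {x} := by
    ext y
    simp only [Finset.mem_filter, mem_ball, Nat.le_zero, Finset.mem_singleton]
    constructor
    · rintro ⟨h1, _⟩
      exact (T.conn.dist_eq_zero_iff.mp h1).symm
    · rintro rfl
      simp [T.conn.dist_eq_zero_iff.mpr rfl]
  rw [this, Finset.sum_singleton]

lemma Mop_zero (T : HomTree q) (h : T.V → ℂ) (x : T.V) :
    HomTree.Mop T 0 h x = h x := by
  have := Mop_natCast T 0 h x
  norm_num [qpow_zero, Nn_zero] at this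
  exact this

/-- The fundamental recursion for the operators `M_n`. -/
lemma Mop_rec (hq : 0 < q) (T : HomTree q) (h : T.V → ℂ) (x : T.V) {n : ℤ} (hn : 0 ≤ n) :
    HomTree.qpow q (-(1 : ℝ) / 2) * ∑ z ∈ T.sphere x 1, HomTree.Mop T n h z
      = HomTree.Mop T (n + 1) h x + HomTree.Mop T (n - 1) h x := by
  obtain ⟨m, rfl⟩ := Int.eq_ofNat_of_zero_le hn
  have hrw : ∀ z ∈ T.sphere x 1, HomTree.Mop T (m : ℤ) h z
      = HomTree.qpow q (-(m : ℝ) / 2) * Nn T m h z := fun z _ => Mop_natCast T m h z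
  rw [Finset.sum_congr rfl hrw, ← Finset.mul_sum, ← mul_assoc, ← qpow_add hq,
    sum_sphere_Nn T h x m]
  have hexp : -(1 : ℝ) / 2 + -(m : ℝ) / 2 = -((m + 1 : ℕ) : ℝ) / 2 := by push_cast; ring
  rw [hexp, mul_add]
  have h1 : (((m : ℤ) + 1)) = ((m + 1 : ℕ) : ℤ) := by push_cast; ring
  rw [h1, Mop_natCast T (m + 1) h x]
  congr 1
  rcases Nat.eq_zero_or_pos m with rfl | hm
  · rw [Mop_neg' T (show ((0 : ℕ) : ℤ) - 1 < 0 by norm_num) h x]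
    norm_num
  · have h2 : ((m : ℤ) - 1) = ((m - 1 : ℕ) : ℤ) := by omega
    rw [h2, Mop_natCast T (m - 1) h x, if_neg (by omega)]
    have hexp2 : -((m + 1 : ℕ) : ℝ) / 2 + 1 = -((m - 1 : ℕ) : ℝ) / 2 := by
      push_cast [Nat.cast_sub hm]
      ring
    rw [← hexp2, qpow_add hq, qpow_one hq]
    ring

end OpAlgebra

section CopSop

open HomTree

variable {q : ℕ}

lemma Cop_zero (T : HomTree q) (f : T.V → ℂ) (x : T.V) : HomTree.Cop T 0 f x = f x := by
  rw [HomTree.Cop, if_pos rfl]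

lemma Cop_eq (T : HomTree q) {n : ℤ} (hn : 1 ≤ n) (f : T.V → ℂ) (x : T.V) :
    HomTree.Cop T n f x = (HomTree.Mop T n f x - HomTree.Mop T (n - 2) f x) / 2 := by
  rw [HomTree.Cop, if_neg (by omega), abs_of_nonneg (by omega)]

lemma Cop_negIdx (T : HomTree q) (n : ℤ) (f : T.V → ℂ) (x : T.V) :
    HomTree.Cop T (-n) f x = HomTree.Cop T n f x := by
  simp only [HomTree.Cop, neg_eq_zero, abs_neg]

lemma Sop_negIdx (T : HomTree q) (n : ℤ) (g : T.V → ℂ) (x : T.V) :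
    HomTree.Sop T (-n) g x = - HomTree.Sop T n g x := by
  simp only [HomTree.Sop, Int.sign_neg, abs_neg]
  push_cast
  ring

lemma Sop_eq' (T : HomTree q) {n : ℤ} (hn : 0 ≤ n) (g : T.V → ℂ) (x : T.V) :
    HomTree.Sop T n g x = HomTree.Mop T (n - 1) g x := by
  rcases eq_or_lt_of_le hn with rfl | hn1
  · rw [show (0:ℤ) - 1 = -1 by norm_num, Mop_neg' T (show (-1:ℤ) < 0 by norm_num) g x,
      HomTree.Sop, Int.sign_zero]
    norm_num
  · rw [HomTree.Sop, Int.sign_eq_one_iff_pos.mpr hn1, abs_of_nonneg hn]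
    norm_num

lemma Cop_rec (hq : 0 < q) (T : HomTree q) (f : T.V → ℂ) (x : T.V) (n : ℤ) :
    HomTree.Cop T (n + 1) f x + HomTree.Cop T (n - 1) f x
      = HomTree.qpow q (-(1 : ℝ) / 2) * ∑ z ∈ T.sphere x 1, HomTree.Cop T n f z := by
  have hpos : ∀ m : ℤ, 0 ≤ m →
      HomTree.Cop T (m + 1) f x + HomTree.Cop T (m - 1) f x
        = HomTree.qpow q (-(1 : ℝ) / 2) * ∑ z ∈ T.sphere x 1, HomTree.Cop T m f z := by
    intro m hm
    obtain rfl | rfl | hm2 : m = 0 ∨ m = 1 ∨ 2 ≤ m := by omega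
    · -- m = 0
      have hS : ∀ z ∈ T.sphere x 1, HomTree.Cop T 0 f z = HomTree.Mop T 0 f z :=
        fun z _ => by rw [Cop_zero, Mop_zero]
      rw [Finset.sum_congr rfl hS, Mop_rec hq T f x le_rfl]
      rw [show (0:ℤ) + 1 = 1 by norm_num, show (0:ℤ) - 1 = -1 by norm_num,
        show (-1 : ℤ) = -(1 : ℤ) by norm_num, Cop_negIdx, Cop_eq T le_rfl,
        Mop_neg' T (show (1 : ℤ) - 2 < 0 by norm_num) f x,
        Mop_neg' T (show -(1 : ℤ) < 0 by norm_num) f x]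
      ring
    · -- m = 1
      have hS : ∀ z ∈ T.sphere x 1, HomTree.Cop T 1 f z = HomTree.Mop T 1 f z / 2 :=
        fun z _ => by
          rw [Cop_eq T le_rfl, Mop_neg' T (show (1 : ℤ) - 2 < 0 by norm_num) f z]
          ring
      rw [Finset.sum_congr rfl hS, ← Finset.sum_div]
      have hA := Mop_rec hq T f x (show (0:ℤ) ≤ 1 by norm_num)
      rw [show (1:ℤ) + 1 = 2 by norm_num, show (1:ℤ) - 1 = 0 by norm_num] at hA ⊢
      rw [Cop_eq T (by norm_num), Cop_zero, ← Mop_zero T f x,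
        show (2:ℤ) - 2 = 0 by norm_num]
      linear_combination -hA / 2
    · -- m ≥ 2
      have hS : ∀ z ∈ T.sphere x 1, HomTree.Cop T m f z
          = (HomTree.Mop T m f z - HomTree.Mop T (m - 2) f z) / 2 :=
        fun z _ => Cop_eq T (by omega) f z
      rw [Finset.sum_congr rfl hS, ← Finset.sum_div, Finset.sum_sub_distrib]
      have hA := Mop_rec hq T f x (show (0:ℤ) ≤ m by omega)
      have hB := Mop_rec hq T f x (show (0:ℤ) ≤ m - 2 by omega)
      rw [show m - 2 + 1 = m - 1 by ring, show m - 2 - 1 = m - 3 by ring] at hB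
      rw [Cop_eq T (by omega), Cop_eq T (by omega),
        show m + 1 - 2 = m - 1 by ring, show m - 1 - 2 = m - 3 by ring]
      linear_combination (hB - hA) / 2
  rcases le_or_gt 0 n with hn | hn
  · exact hpos n hn
  · have key := hpos (-n) (by omega)
    have e1 : HomTree.Cop T (n + 1) f x = HomTree.Cop T (-n - 1) f x := by
      rw [← Cop_negIdx T (n+1) f x, show -(n+1) = -n-1 by ring]
    have e2 : HomTree.Cop T (n - 1) f x = HomTree.Cop T (-n + 1) f x := by
      rw [← Cop_negIdx T (n-1) f x, show -(n-1) = -n+1 by ring]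
    have e3 : ∀ z ∈ T.sphere x 1, HomTree.Cop T n f z = HomTree.Cop T (-n) f z :=
      fun z _ => by
        have h := Cop_negIdx T (-n) f z
        rwa [neg_neg] at h
    rw [e1, e2, Finset.sum_congr rfl e3]
    linear_combination key
  
lemma Sop_rec (hq : 0 < q) (T : HomTree q) (g : T.V → ℂ) (x : T.V) (n : ℤ) :
    HomTree.Sop T (n + 1) g x + HomTree.Sop T (n - 1) g x
      = HomTree.qpow q (-(1 : ℝ) / 2) * ∑ z ∈ T.sphere x 1, HomTree.Sop T n g z := by
  have hpos : ∀ m : ℤ, 0 ≤ m →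
      HomTree.Sop T (m + 1) g x + HomTree.Sop T (m - 1) g x
        = HomTree.qpow q (-(1 : ℝ) / 2) * ∑ z ∈ T.sphere x 1, HomTree.Sop T m g z := by
    intro m hm
    obtain rfl | hm1 : m = 0 ∨ 1 ≤ m := by omega
    · -- m = 0
      have hS : ∀ z ∈ T.sphere x 1, HomTree.Sop T 0 g z = 0 := fun z _ => by
        rw [Sop_eq' T le_rfl, show (0:ℤ) - 1 = -1 by norm_num,
          Mop_neg' T (show (-1:ℤ) < 0 by norm_num)]
      rw [Finset.sum_congr rfl hS, Finset.sum_const, smul_zero, mul_zero,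
        show (0:ℤ) + 1 = 1 by norm_num, show (0:ℤ) - 1 = -(1:ℤ) by norm_num, Sop_negIdx]
      ring
    · -- m ≥ 1
      have hS : ∀ z ∈ T.sphere x 1, HomTree.Sop T m g z = HomTree.Mop T (m - 1) g z :=
        fun z _ => Sop_eq' T (by omega) g z
      rw [Finset.sum_congr rfl hS]
      have hA := Mop_rec hq T g x (show (0:ℤ) ≤ m - 1 by omega)
      rw [show m - 1 + 1 = m by ring, show m - 1 - 1 = m - 2 by ring] at hA
      rw [Sop_eq' T (by omega), Sop_eq' T (by omega),
        show m + 1 - 1 = m by ring, show m - 1 - 1 = m - 2 by ring]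
      linear_combination -hA
  rcases le_or_gt 0 n with hn | hn
  · exact hpos n hn
  · have key := hpos (-n) (by omega)
    have e1 : HomTree.Sop T (n + 1) g x = - HomTree.Sop T (-n - 1) g x := by
      rw [show -n - 1 = -(n+1) by ring, Sop_negIdx]
      ring
    have e2 : HomTree.Sop T (n - 1) g x = - HomTree.Sop T (-n + 1) g x := by
      rw [show -n + 1 = -(n-1) by ring, Sop_negIdx]
      ring
    have e3 : ∀ z ∈ T.sphere x 1, HomTree.Sop T n g z = - HomTree.Sop T (-n) g z :=
      fun z _ => by
        have h := Sop_negIdx T (-n) g z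
        rw [neg_neg] at h
        rw [h]
    rw [e1, e2, Finset.sum_congr rfl e3, Finset.sum_neg_distrib]
    linear_combination -key

end CopSop





open HomTree in
/-- explicit solution of the shifted wave equation on the tree. -/
theorem stmt9 {q : ℕ} (hq : 2 ≤ q) (T : HomTree q) (f g : T.V → ℂ)
    (u : T.V → ℤ → ℂ) (hu : HomTree.IsCauchy T f g u) :
    (∀ (x : T.V) (n : ℤ), u x n = HomTree.Cop T n f x + HomTree.Sop T n g x) ∧
    ∀ (x : T.V) (n : ℤ), n ≠ 0 →
      u x n =
        (1/2 : ℂ) * HomTree.qpow q (-(n.natAbs : ℝ) / 2) *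
            (∑ y ∈ T.sphere x n.natAbs, f y)
        - (((q : ℂ) - 1) / 2) * HomTree.qpow q (-(n.natAbs : ℝ) / 2) *
            ∑ y ∈ (T.ball x n.natAbs).filter
              (fun y => T.G.dist x y < n.natAbs ∧ (n.natAbs - T.G.dist x y) % 2 = 0), f y
        + (n.sign : ℂ) * HomTree.qpow q (-((n.natAbs : ℝ) - 1) / 2) *
            ∑ y ∈ (T.ball x n.natAbs).filter
              (fun y => T.G.dist x y < n.natAbs ∧ (n.natAbs - T.G.dist x y) % 2 = 1), g y := by
  classical
  have hq0 : 0 < q := by omega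
  obtain ⟨hwave, hf0, hg0⟩ := hu
  set v : T.V → ℤ → ℂ := fun x n => HomTree.Cop T n f x + HomTree.Sop T n g x with hv
  have hvwave : ∀ (x : T.V) (n : ℤ), v x (n + 1) + v x (n - 1)
      = HomTree.qpow q (-(1 : ℝ) / 2) * ∑ z ∈ T.sphere x 1, v z n := by
    intro x n
    have hC := Cop_rec hq0 T f x n
    have hS := Sop_rec hq0 T g x n
    simp only [hv]
    rw [Finset.sum_add_distrib]
    linear_combination hC + hS
  have hv0 : ∀ x, v x 0 = f x := by
    intro x
    simp only [hv]
    rw [Cop_zero, Sop_eq' T le_rfl, show (0:ℤ) - 1 = -1 by norm_num,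
      Mop_neg' T (show (-1:ℤ) < 0 by norm_num)]
    ring
  have hv1 : ∀ x, v x 1 = HomTree.Mop T 1 f x / 2 + g x := by
    intro x
    simp only [hv]
    rw [Cop_eq T le_rfl, Sop_eq' T (by norm_num), show (1:ℤ) - 2 = -1 by norm_num,
      show (1:ℤ) - 1 = 0 by norm_num, Mop_neg' T (show (-1:ℤ) < 0 by norm_num),
      Mop_zero]
    ring
  have hvm1 : ∀ x, v x (-1) = HomTree.Mop T 1 f x / 2 - g x := by
    intro x
    simp only [hv]
    rw [show (-1:ℤ) = -(1:ℤ) by norm_num, Cop_negIdx, Sop_negIdx,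
      Cop_eq T le_rfl, Sop_eq' T (by norm_num), show (1:ℤ) - 2 = -1 by norm_num,
      show (1:ℤ) - 1 = 0 by norm_num, Mop_neg' T (show (-1:ℤ) < 0 by norm_num),
      Mop_zero]
    ring
  have hsum0 : ∀ x, HomTree.qpow q (-(1 : ℝ) / 2) * ∑ z ∈ T.sphere x 1, u z 0
      = HomTree.Mop T 1 f x := by
    intro x
    have hz : ∀ z ∈ T.sphere x 1, u z 0 = HomTree.Mop T 0 f z := fun z _ => by
      rw [hf0 z, Mop_zero]
    rw [Finset.sum_congr rfl hz, Mop_rec hq0 T f x le_rfl,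
      show (0:ℤ) + 1 = 1 by norm_num, show (0:ℤ) - 1 = -1 by norm_num,
      Mop_neg' T (show (-1:ℤ) < 0 by norm_num)]
    ring
  have hu1 : ∀ x, u x 1 = HomTree.Mop T 1 f x / 2 + g x := by
    intro x
    have h1 := hwave x 0
    rw [show (0:ℤ) + 1 = 1 by norm_num, show (0:ℤ) - 1 = -1 by norm_num] at h1
    have h2 := hg0 x
    have h3 := hsum0 x
    linear_combination h1 / 2 + h2 + h3 / 2
  have hum1 : ∀ x, u x (-1) = HomTree.Mop T 1 f x / 2 - g x := by
    intro x
    have h1 := hwave x 0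
    rw [show (0:ℤ) + 1 = 1 by norm_num, show (0:ℤ) - 1 = -1 by norm_num] at h1
    have h2 := hg0 x
    have h3 := hsum0 x
    linear_combination h1 / 2 - h2 + h3 / 2
  have main : ∀ (k : ℕ) (x : T.V),
      (u x k = v x k ∧ u x (-(k:ℤ)) = v x (-(k:ℤ)))
      ∧ (u x ((k:ℤ) + 1) = v x ((k:ℤ) + 1) ∧ u x (-(k:ℤ) - 1) = v x (-(k:ℤ) - 1)) := by
    intro k
    induction k with
    | zero =>
      intro x
      refine ⟨⟨?_, ?_⟩, ?_, ?_⟩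
      · rw [Nat.cast_zero, hf0 x, hv0 x]
      · rw [Nat.cast_zero, neg_zero, hf0 x, hv0 x]
      · rw [Nat.cast_zero, zero_add, hu1 x, hv1 x]
      · rw [Nat.cast_zero, neg_zero, zero_sub, hum1 x, hvm1 x]
    | succ k ih =>
      intro x
      have hcast : ((k + 1 : ℕ) : ℤ) = (k : ℤ) + 1 := by push_cast; ring
      refine ⟨⟨?_, ?_⟩, ?_, ?_⟩
      · rw [hcast]
        exact (ih x).2.1
      · rw [hcast, show -((k:ℤ) + 1) = -(k:ℤ) - 1 by ring]
        exact (ih x).2.2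
      · -- u x (k+2) = v x (k+2)
        rw [hcast]
        have h1 := hwave x ((k:ℤ) + 1)
        have h2 := hvwave x ((k:ℤ) + 1)
        rw [show (k:ℤ) + 1 - 1 = (k:ℤ) by ring] at h1 h2
        have hSeq : ∑ z ∈ T.sphere x 1, u z ((k:ℤ) + 1)
            = ∑ z ∈ T.sphere x 1, v z ((k:ℤ) + 1) :=
          Finset.sum_congr rfl fun z _ => (ih z).2.1
        have h3 := (ih x).1.1
        linear_combination h1 - h2 - h3 + HomTree.qpow q (-(1 : ℝ) / 2) * hSeq
      · -- u x (-(k+1) - 1) = v x (-(k+1) - 1)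
        rw [hcast]
        have h1 := hwave x (-(k:ℤ) - 1)
        have h2 := hvwave x (-(k:ℤ) - 1)
        rw [show -(k:ℤ) - 1 + 1 = -(k:ℤ) by ring, show -(k:ℤ) - 1 - 1 = -((k:ℤ)+1) - 1 by ring] at h1 h2
        have hSeq : ∑ z ∈ T.sphere x 1, u z (-(k:ℤ) - 1)
            = ∑ z ∈ T.sphere x 1, v z (-(k:ℤ) - 1) :=
          Finset.sum_congr rfl fun z _ => (ih z).2.2
        have h3 := (ih x).1.2
        linear_combination h1 - h2 - h3 + HomTree.qpow q (-(1 : ℝ) / 2) * hSeq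
  have part1 : ∀ (x : T.V) (n : ℤ), u x n = HomTree.Cop T n f x + HomTree.Sop T n g x := by
    intro x n
    obtain ⟨k, rfl | rfl⟩ := n.eq_nat_or_neg
    · exact (main k x).1.1
    · exact (main k x).1.2
  refine ⟨part1, ?_⟩
  intro x n hn
  rw [part1 x n]
  have hm1 : 1 ≤ n.natAbs := by omega
  set E : ℂ := ∑ y ∈ (T.ball x n.natAbs).filter
      (fun y => T.G.dist x y < n.natAbs ∧ (n.natAbs - T.G.dist x y) % 2 = 0), f y with hE
  set O : ℂ := ∑ y ∈ (T.ball x n.natAbs).filter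
      (fun y => T.G.dist x y < n.natAbs ∧ (n.natAbs - T.G.dist x y) % 2 = 1), g y with hO
  have habs : |n| = (n.natAbs : ℤ) := Int.abs_eq_natAbs n
  -- (A) the top operator
  have hA : HomTree.Mop T (n.natAbs : ℤ) f x
      = HomTree.qpow q (-(n.natAbs : ℝ) / 2) * ((∑ y ∈ T.sphere x n.natAbs, f y) + E) := by
    rw [Mop_natCast T n.natAbs f x, Nn]
    congr 1
    have hset : (T.ball x n.natAbs).filter (fun y => (n.natAbs - T.G.dist x y) % 2 = 0)
        = T.sphere x n.natAbs ∪ (T.ball x n.natAbs).filter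
            (fun y => T.G.dist x y < n.natAbs ∧ (n.natAbs - T.G.dist x y) % 2 = 0) := by
      ext y
      simp only [Finset.mem_filter, Finset.mem_union, mem_ball, mem_sphere]
      omega
    have hdisj : Disjoint (T.sphere x n.natAbs) ((T.ball x n.natAbs).filter
        (fun y => T.G.dist x y < n.natAbs ∧ (n.natAbs - T.G.dist x y) % 2 = 0)) := by
      rw [Finset.disjoint_left]
      intro y hy1 hy2
      rw [mem_sphere] at hy1
      simp only [Finset.mem_filter, mem_ball] at hy2
      omega
    rw [hset, Finset.sum_union hdisj, hE]
  -- (B) the second operator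
  have hB : HomTree.Mop T ((n.natAbs : ℤ) - 2) f x
      = (q : ℂ) * HomTree.qpow q (-(n.natAbs : ℝ) / 2) * E := by
    obtain hm2 | hm2 : n.natAbs = 1 ∨ 2 ≤ n.natAbs := by omega
    · rw [hm2, Mop_neg' T (show ((1:ℕ):ℤ) - 2 < 0 by norm_num)]
      have hEz : E = 0 := by
        rw [hE, Finset.sum_eq_zero]
        intro y hy
        exfalso
        simp only [Finset.mem_filter] at hy
        omega
      rw [hEz]
      ring
    · have h2 : ((n.natAbs : ℤ) - 2) = ((n.natAbs - 2 : ℕ) : ℤ) := by omega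
      rw [h2, Mop_natCast T (n.natAbs - 2) f x, Nn]
      have hset : (T.ball x (n.natAbs - 2)).filter
            (fun y => (n.natAbs - 2 - T.G.dist x y) % 2 = 0)
          = (T.ball x n.natAbs).filter
              (fun y => T.G.dist x y < n.natAbs ∧ (n.natAbs - T.G.dist x y) % 2 = 0) := by
        ext y
        simp only [Finset.mem_filter, mem_ball]
        omega
      have hexp : -((n.natAbs - 2 : ℕ) : ℝ) / 2 = 1 + -(n.natAbs : ℝ) / 2 := by
        push_cast [Nat.cast_sub hm2]
        ring
      rw [hset, hexp, qpow_add hq0, qpow_one hq0, hE]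
  -- (C) the S operator
  have hC : HomTree.Sop T n g x
      = (n.sign : ℂ) * HomTree.qpow q (-((n.natAbs : ℝ) - 1) / 2) * O := by
    rw [HomTree.Sop, habs]
    have h2 : ((n.natAbs : ℤ) - 1) = ((n.natAbs - 1 : ℕ) : ℤ) := by omega
    rw [h2, Mop_natCast T (n.natAbs - 1) g x, Nn]
    have hset : (T.ball x (n.natAbs - 1)).filter
          (fun y => (n.natAbs - 1 - T.G.dist x y) % 2 = 0)
        = (T.ball x n.natAbs).filter
            (fun y => T.G.dist x y < n.natAbs ∧ (n.natAbs - T.G.dist x y) % 2 = 1) := by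
      ext y
      simp only [Finset.mem_filter, mem_ball]
      omega
    have hexp : -((n.natAbs - 1 : ℕ) : ℝ) / 2 = -((n.natAbs : ℝ) - 1) / 2 := by
      push_cast [Nat.cast_sub hm1]
      ring
    rw [hset, hexp, hO]
    ring
  rw [HomTree.Cop, if_neg hn, habs, hA, hB, hC]
  ring
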